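/- Let X be a homogeneous contractive normed c₀-module, let x ∈ X_es and y ∈ X. If ‖xₙ‖ ≤ ‖yₙ‖ for all n ∈ ℕ, then ‖x‖ ≤ ‖y‖. -/

import Mathlib

open Filter MeasureTheory

noncomputable section

/-- The algebra `c₀` of complex sequences converging to zero, with pointwise
operations and the supremum norm. -/
abbrev czero : Type := ZeroAtInftyContinuousMap ℕ ℂ

/-- The `n`-th ort: the indicator sequence of `{n}`. -/
def ort (n : ℕ) : czero where
  toFun := fun m => if m = n then 1 else 0
  continuous_toFun := continuous_of_discreteTopology
  zero_at_infty' := by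
    rw [cocompact_eq_atTop]
    have h : (fun m : ℕ => if m = n then (1 : ℂ) else 0) =ᶠ[atTop] fun _ => (0 : ℂ) := by
      filter_upwards [eventually_gt_atTop n] with m hm
      simp [Nat.ne_of_gt hm]
    exact (tendsto_congr' h).mpr tendsto_const_nhds

/-- `P N = p⁰ + ⋯ + p^{N-1}`. -/
def PN (N : ℕ) : czero := ∑ n ∈ Finset.range N, ort n

/-- A (contractive) normed `c₀`-module structure on a complex normed space `X`. -/
structure C0Mod (X : Type) [NormedAddCommGroup X] [NormedSpace ℂ X] where
  smul : czero → X → X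
  add_smul : ∀ a b x, smul (a + b) x = smul a x + smul b x
  smul_add : ∀ a x y, smul a (x + y) = smul a x + smul a y
  mul_smul : ∀ a b x, smul (a * b) x = smul a (smul b x)
  csmul_left : ∀ (c : ℂ) a x, smul (c • a) x = c • smul a x
  csmul_right : ∀ (c : ℂ) a x, smul a (c • x) = c • smul a x
  norm_smul_le : ∀ a x, ‖smul a x‖ ≤ ‖a‖ * ‖x‖

namespace C0Mod

variable {X : Type} [NormedAddCommGroup X] [NormedSpace ℂ X] (M : C0Mod X)

/-- The action of `a ∈ c₀` as a continuous linear map. -/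
def lsmul (a : czero) : X →L[ℂ] X :=
  LinearMap.mkContinuous
    { toFun := M.smul a
      map_add' := M.smul_add a
      map_smul' := fun c x => M.csmul_right c a x }
    ‖a‖ (fun x => M.norm_smul_le a x)

@[simp] lemma lsmul_apply (a : czero) (x : X) : M.lsmul a x = M.smul a x := rfl

/-- The essential part `X_es` of `X`: the closure of the linear span of all
products `a • x`. -/
def essSet : Set X :=
  closure (Submodule.span ℂ {y : X | ∃ (a : czero) (x : X), y = M.smul a x} : Set X)

/-- A module is essential if it coincides with its essential part. -/
def Essential : Prop := M.essSet = Set.univ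

/-- The `n`-th coordinate submodule `Xₙ = {pⁿ • x : x ∈ X}`. -/
def coordSub (n : ℕ) : Submodule ℂ X := LinearMap.range ((M.lsmul (ort n)) : X →ₗ[ℂ] X)

lemma mem_coordSub (n : ℕ) (x : X) : M.smul (ort n) x ∈ M.coordSub n := ⟨x, rfl⟩

/-- A module is homogeneous if the norm of an element is determined by the norms
of its coordinates. -/
def Homogeneous : Prop :=
  ∀ x y : X, (∀ n : ℕ, ‖M.smul (ort n) x‖ = ‖M.smul (ort n) y‖) → ‖x‖ = ‖y‖

/-- The annihilator of `c₀` in `X`. -/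
def ann : Submodule ℂ X where
  carrier := {x : X | ∀ a : czero, M.smul a x = 0}
  add_mem' := by
    intro x y hx hy
    intro a
    rw [M.smul_add, hx a, hy a, add_zero]
  zero_mem' := by
    intro a
    have h := M.smul_add a 0 0
    simp only [add_zero] at h
    have := congrArg (fun z => z - M.smul a 0) h
    simpa using this.symm
  smul_mem' := by
    intro c x hx a
    rw [M.csmul_right, hx a, smul_zero]

end C0Mod


section Aux

lemma czero_sum_apply {iota : Type*} (s : Finset iota) (f : iota -> czero) (m : Nat) :
    (Finset.sum s f) m = Finset.sum s (fun i => f i m) :=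
  map_sum (AddMonoidHom.mk' (fun g : czero => g m) (fun _ _ => rfl)) f s

lemma czero_norm_le (f : czero) {C : ℝ} (hC : 0 ≤ C) (hf : ∀ m, ‖f m‖ ≤ C) : ‖f‖ ≤ C := by
  rw [← ZeroAtInftyContinuousMap.norm_toBCF_eq_norm]
  exact (BoundedContinuousFunction.norm_le hC).mpr hf

lemma czero_apply_le (f : czero) (m : ℕ) : ‖f m‖ ≤ ‖f‖ := by
  rw [← ZeroAtInftyContinuousMap.norm_toBCF_eq_norm]
  exact BoundedContinuousFunction.norm_coe_le_norm f.toBCF m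

lemma ort_apply (n m : ℕ) : (ort n) m = if m = n then 1 else 0 := rfl

lemma PN_apply (N m : ℕ) : (PN N) m = if m < N then 1 else 0 := by
  rw [PN, czero_sum_apply]
  simp only [ort_apply]
  rw [Finset.sum_ite_eq (Finset.range N) m (fun _ => (1 : ℂ))]
  simp

lemma norm_PN_le (N : ℕ) : ‖PN N‖ ≤ 1 := by
  apply czero_norm_le _ zero_le_one
  intro m
  rw [PN_apply]
  split <;> simp

lemma ort_mul_PN_of_lt {n N : ℕ} (h : n < N) : ort n * PN N = ort n := by
  ext m
  simp only [ZeroAtInftyContinuousMap.coe_mul, Pi.mul_apply, ort_apply, PN_apply]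
  by_cases hm : m = n <;> simp [hm, h]

lemma ort_mul_PN_of_ge {n N : ℕ} (h : N ≤ n) : ort n * PN N = 0 := by
  ext m
  simp only [ZeroAtInftyContinuousMap.coe_mul, Pi.mul_apply, ort_apply, PN_apply,
    ZeroAtInftyContinuousMap.coe_zero, Pi.zero_apply]
  by_cases hm : m = n
  · simp [hm, Nat.not_lt.mpr h]
  · simp [hm]

lemma tendsto_PN_mul (a : czero) :
    Tendsto (fun N => ‖PN N * a - a‖) atTop (nhds 0) := by
  rw [NormedAddCommGroup.tendsto_nhds_zero]
  intro ε hε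
  have hz : Tendsto (⇑a) atTop (nhds 0) := by
    have := a.zero_at_infty'
    rwa [cocompact_eq_atTop] at this
  have hz0 : Tendsto (fun m => ‖a m‖) atTop (nhds 0) := by simpa using hz.norm
  have : ∀ᶠ m in atTop, ‖a m‖ < ε / 2 :=
    hz0.eventually (eventually_lt_nhds (by positivity : (0:ℝ) < ε / 2))
  obtain ⟨K, hK⟩ := this.exists_forall_of_atTop
  rw [eventually_atTop]
  refine ⟨K, fun N hN => ?_⟩
  have hle : ‖PN N * a - a‖ ≤ ε / 2 := by
    apply czero_norm_le _ (by positivity)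
    intro m
    have : (PN N * a - a) m = (if m < N then 1 else 0) * a m - a m := by
      simp [PN_apply]
    rw [this]
    by_cases hm : m < N
    · simp [hm]; positivity
    · simp only [hm, if_false, zero_mul, zero_sub, norm_neg]
      exact le_of_lt (hK m (le_trans hN (Nat.not_lt.mp hm)))
  calc ‖‖PN N * a - a‖‖ = ‖PN N * a - a‖ := by rw [Real.norm_of_nonneg (norm_nonneg _)]
    _ ≤ ε / 2 := hle
    _ < ε := by linarith

end Aux

namespace C0Mod

variable {X : Type} [NormedAddCommGroup X] [NormedSpace ℂ X] (M : C0Mod X)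

lemma smul_zero_right (a : czero) : M.smul a 0 = 0 := by
  have h := M.smul_add a 0 0
  simp only [add_zero] at h
  have := congrArg (fun z => z - M.smul a 0) h
  simpa using this.symm

lemma smul_zero_left (x : X) : M.smul 0 x = 0 := by
  have h := M.add_smul 0 0 x
  simp only [add_zero] at h
  have := congrArg (fun z => z - M.smul 0 x) h
  simpa using this.symm

lemma tendsto_PN_smul {x : X} (hx : x ∈ M.essSet) :
    Tendsto (fun N => M.smul (PN N) x) atTop (nhds x) := by
  have hspan : ∀ z ∈ (Submodule.span ℂ
      {y : X | ∃ (a : czero) (x : X), y = M.smul a x}),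
      Tendsto (fun N => M.smul (PN N) z) atTop (nhds z) := by
    intro z hz
    induction hz using Submodule.span_induction with
    | mem w hw =>
      obtain ⟨a, v, rfl⟩ := hw
      have key : ∀ N, M.smul (PN N) (M.smul a v) - M.smul a v
          = M.smul (PN N * a - a) v := by
        intro N
        have h1 := M.add_smul (PN N * a - a) a v
        rw [sub_add_cancel, M.mul_smul] at h1
        rw [h1]; abel
      rw [tendsto_iff_norm_sub_tendsto_zero]
      have hb : ∀ N, ‖M.smul (PN N) (M.smul a v) - M.smul a v‖ ≤ ‖PN N * a - a‖ * ‖v‖ := by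
        intro N
        rw [key N]
        exact M.norm_smul_le _ v
      exact squeeze_zero (fun N => norm_nonneg _) hb
        (by simpa using (tendsto_PN_mul a).mul_const ‖v‖)
    | zero =>
      simp only [M.smul_zero_right]
      exact tendsto_const_nhds
    | add u v _ _ hu hv =>
      have : ∀ N, M.smul (PN N) (u + v) = M.smul (PN N) u + M.smul (PN N) v :=
        fun N => M.smul_add _ u v
      simpa [this] using hu.add hv
    | smul c u _ hu =>
      have : ∀ N, M.smul (PN N) (c • u) = c • M.smul (PN N) u :=
        fun N => M.csmul_right c _ u
      simpa [this] using hu.const_smul c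
  -- closure step
  rw [Metric.tendsto_atTop]
  intro ε hε
  rw [C0Mod.essSet, Metric.mem_closure_iff] at hx
  obtain ⟨z, hzmem, hzd⟩ := hx (ε / 3) (by positivity)
  have hz := hspan z hzmem
  rw [Metric.tendsto_atTop] at hz
  obtain ⟨N₀, hN₀⟩ := hz (ε / 3) (by positivity)
  refine ⟨N₀, fun N hN => ?_⟩
  have h1 : ‖M.smul (PN N) x - M.smul (PN N) z‖ ≤ ‖x - z‖ := by
    have : M.smul (PN N) x - M.smul (PN N) z = M.smul (PN N) (x - z) := by
      have := M.smul_add (PN N) z (x - z)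
      simp only [add_sub_cancel] at this
      rw [this]; abel
    rw [this]
    calc ‖M.smul (PN N) (x - z)‖ ≤ ‖PN N‖ * ‖x - z‖ := M.norm_smul_le _ _
      _ ≤ 1 * ‖x - z‖ := by
          exact mul_le_mul_of_nonneg_right (norm_PN_le N) (norm_nonneg _)
      _ = ‖x - z‖ := one_mul _
  have h2 := hN₀ N hN
  rw [dist_eq_norm] at hzd h2 ⊢
  calc ‖M.smul (PN N) x - x‖
      ≤ ‖M.smul (PN N) x - M.smul (PN N) z‖ + ‖M.smul (PN N) z - z‖ + ‖z - x‖ := by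
        have := norm_add₃_le (a := M.smul (PN N) x - M.smul (PN N) z)
          (b := M.smul (PN N) z - z) (c := z - x)
        simpa using this
    _ < ε / 3 + ε / 3 + ε / 3 := by
        have hzx : ‖z - x‖ < ε / 3 := by rwa [norm_sub_rev]
        have h1' : ‖M.smul (PN N) x - M.smul (PN N) z‖ < ε / 3 := lt_of_le_of_lt h1 hzd
        gcongr
    _ = ε := by ring

end C0Mod

/-- Let `X` be a homogeneous contractive normed `c₀`-module,
`x ∈ X_es` and `y ∈ X`. If `‖xₙ‖ ≤ ‖yₙ‖` for every `n`, then `‖x‖ ≤ ‖y‖`. -/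
theorem homogeneous_norm_le
    {X : Type} [NormedAddCommGroup X] [NormedSpace ℂ X] (M : C0Mod X)
    (hhom : M.Homogeneous) (x y : X) (hx : x ∈ M.essSet)
    (h : ∀ n : ℕ, ‖M.smul (ort n) x‖ ≤ ‖M.smul (ort n) y‖) :
    ‖x‖ ≤ ‖y‖ := by
  -- Step 1: for each N, ‖P_N • x‖ ≤ ‖y‖ using homogeneity.
  have step : ∀ N : ℕ, ‖M.smul (PN N) x‖ ≤ ‖y‖ := by
    intro N
    set t : ℕ → ℝ := fun n => ‖M.smul (ort n) x‖ / ‖M.smul (ort n) y‖ with ht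
    have ht_nonneg : ∀ n, 0 ≤ t n := fun n => div_nonneg (norm_nonneg _) (norm_nonneg _)
    have ht_le : ∀ n, t n ≤ 1 := by
      intro n
      by_cases hy : ‖M.smul (ort n) y‖ = 0
      · simp [ht, hy]
      · exact div_le_one_of_le₀ (h n) (norm_nonneg _)
    have ht_mul : ∀ n, t n * ‖M.smul (ort n) y‖ = ‖M.smul (ort n) x‖ := by
      intro n
      by_cases hy : ‖M.smul (ort n) y‖ = 0
      · have hx0 : ‖M.smul (ort n) x‖ = 0 :=
          le_antisymm (by rw [← hy]; exact h n) (norm_nonneg _)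
        simp [ht, hy, hx0]
      · exact div_mul_cancel₀ _ hy
    set c : czero := ∑ n ∈ Finset.range N, ((t n : ℂ)) • ort n with hc
    have hc_apply : ∀ m, c m = if m < N then (t m : ℂ) else 0 := by
      intro m
      rw [hc, czero_sum_apply]
      simp only [ZeroAtInftyContinuousMap.coe_smul, Pi.smul_apply, ort_apply,
        smul_eq_mul, mul_ite, mul_one, mul_zero]
      rw [Finset.sum_ite_eq (Finset.range N) m (fun n => (t n : ℂ))]
      simp
    have hc_norm : ‖c‖ ≤ 1 := by
      apply czero_norm_le _ zero_le_one
      intro m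
      rw [hc_apply m]
      split
      · rw [Complex.norm_real, Real.norm_of_nonneg (ht_nonneg m)]
        exact ht_le m
      · simp
    have hort_mul_c : ∀ n, ort n * c = if n < N then (t n : ℂ) • ort n else 0 := by
      intro n
      ext m
      have hcm := hc_apply m
      by_cases hn : n < N
      · simp only [hn, if_true, ZeroAtInftyContinuousMap.coe_mul, Pi.mul_apply,
          ZeroAtInftyContinuousMap.coe_smul, Pi.smul_apply, ort_apply, hcm]
        by_cases hm : m = n
        · subst hm; simp [hn]
        · simp [hm]
      · simp only [hn, if_false, ZeroAtInftyContinuousMap.coe_mul, Pi.mul_apply,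
          ZeroAtInftyContinuousMap.coe_zero, Pi.zero_apply, ort_apply, hcm]
        by_cases hm : m = n
        · subst hm; simp [hn]
        · simp [hm]
    -- coordinates agree
    have hcoord : ∀ n : ℕ, ‖M.smul (ort n) (M.smul (PN N) x)‖ = ‖M.smul (ort n) (M.smul c y)‖ := by
      intro n
      rw [← M.mul_smul, ← M.mul_smul]
      by_cases hn : n < N
      · rw [ort_mul_PN_of_lt hn, hort_mul_c n]
        simp only [hn, if_true]
        rw [M.csmul_left, norm_smul, Complex.norm_real,
          Real.norm_of_nonneg (ht_nonneg n), ht_mul n]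
      · rw [ort_mul_PN_of_ge (Nat.not_lt.mp hn), hort_mul_c n]
        simp only [hn, if_false, M.smul_zero_left]
    have heq := hhom _ _ hcoord
    calc ‖M.smul (PN N) x‖ = ‖M.smul c y‖ := heq
      _ ≤ ‖c‖ * ‖y‖ := M.norm_smul_le c y
      _ ≤ 1 * ‖y‖ := mul_le_mul_of_nonneg_right hc_norm (norm_nonneg _)
      _ = ‖y‖ := one_mul _
  -- Step 2: take the limit.
  have hlim := (M.tendsto_PN_smul hx).norm
  exact le_of_tendsto hlim (Filter.Eventually.of_forall step)
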